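/- Let c be a closure operator on subsets of a type α and define M-dividing independence by A ⫶M_C B iff for every C' with C ⊆ C' ⊆ c(B∪C) one has c(A∪C') ∩ c(B∪C') = c(C'). Then ⫶M satisfies monotonicity, base monotonicity, transitivity, normality, and anti-reflexivity (if {a} ⫶M_B {a} then a ∈ c(B)). If moreover c is finitary (every x ∈ c(S) lies in c(F) for some finite F ⊆ S), then ⫶M satisfies finite character. -/
import Mathlib


/-- M-dividing independence relative to a closure operator `c`:
`A ⫶M_C B` iff `c(A∪C') ∩ c(B∪C') = c(C')` for every `C'` with `C ⊆ C' ⊆ c(B∪C)`. -/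
def mDiv {α : Type*} (c : Set α → Set α) (A C B : Set α) : Prop :=
  ∀ C' : Set α, C ⊆ C' → C' ⊆ c (B ∪ C) → c (A ∪ C') ∩ c (B ∪ C') = c C'

/-- basic properties of M-dividing: for any closure operator `c`,
`⫶M` satisfies monotonicity, base monotonicity, transitivity, normality and
anti-reflexivity; and if `c` is finitary it satisfies finite character. -/
theorem stmt_4 {α : Type*} (c : Set α → Set α)
    (cmono : ∀ A B : Set α, A ⊆ B → c A ⊆ c B)
    (cext : ∀ A : Set α, A ⊆ c A)
    (cidem : ∀ A : Set α, c (c A) = c A) :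
    (∀ A B C A' B' : Set α, mDiv c A C B → A' ⊆ A → B' ⊆ B → mDiv c A' C B') ∧
    (∀ A B C D : Set α, D ⊆ C → C ⊆ B → mDiv c A D B → mDiv c A C B) ∧
    (∀ A B C D : Set α, D ⊆ C → C ⊆ B → mDiv c B C A → mDiv c C D A → mDiv c B D A) ∧
    (∀ A B C : Set α, mDiv c A C B → mDiv c (A ∪ C) C B) ∧
    (∀ (a : α) (B : Set α), mDiv c {a} B {a} → a ∈ c B) ∧
    ((∀ (S : Set α) (x : α), x ∈ c S → ∃ F : Finset α, ↑F ⊆ S ∧ x ∈ c ↑F) →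
      ∀ A B C : Set α, (∀ A₀ : Set α, A₀ ⊆ A → A₀.Finite → mDiv c A₀ C B) → mDiv c A C B) := by
  -- trivial inclusion: c C' ⊆ c (X ∪ C') ∩ c (Y ∪ C')
  have triv : ∀ X Y C' : Set α, c C' ⊆ c (X ∪ C') ∩ c (Y ∪ C') := by
    intro X Y C' x hx
    exact ⟨cmono _ _ Set.subset_union_right hx, cmono _ _ Set.subset_union_right hx⟩
  refine ⟨?_, ?_, ?_, ?_, ?_, ?_⟩
  · -- monotonicity
    intro A B C A' B' h hA hB C' hC hC'
    apply Set.Subset.antisymm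
    · intro x hx
      have := h C' hC (hC'.trans (cmono _ _ (Set.union_subset_union_left _ hB)))
      rw [← this]
      exact ⟨cmono _ _ (Set.union_subset_union_left _ hA) hx.1,
        cmono _ _ (Set.union_subset_union_left _ hB) hx.2⟩
    · exact triv _ _ _
  · -- base monotonicity
    intro A B C D hDC hCB h C' hC hC'
    have hBC : B ∪ C = B := Set.union_eq_self_of_subset_right hCB
    have hBD : B ∪ D = B := Set.union_eq_self_of_subset_right (hDC.trans hCB)
    exact h C' (hDC.trans hC) (by rw [hBD]; rw [hBC] at hC'; exact hC')
  · -- transitivity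
    intro A B C D hDC hCB h1 h2 C' hC hC'
    apply Set.Subset.antisymm
    · intro x hx
      set C'' := C ∪ C' with hC''
      have hC'sub : C' ⊆ c (A ∪ C) := hC'.trans (cmono _ _ (Set.union_subset_union_right _ hDC))
      have hCsub : C'' ⊆ c (A ∪ C) :=
        Set.union_subset ((Set.subset_union_right).trans (cext _)) hC'sub
      have e1 := h1 C'' Set.subset_union_left hCsub
      have e2 := h2 C' hC hC'
      have hx1 : x ∈ c C'' := by
        rw [← e1]
        exact ⟨cmono _ _ (Set.union_subset_union_right _ Set.subset_union_right) hx.1,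
          cmono _ _ (Set.union_subset_union_right _ Set.subset_union_right) hx.2⟩
      rw [← e2]
      exact ⟨hx1, hx.2⟩
    · exact triv _ _ _
  · -- normality
    intro A B C h C' hC hC'
    have : A ∪ C ∪ C' = A ∪ C' := by
      rw [Set.union_assoc, Set.union_eq_self_of_subset_left hC]
    rw [this]
    exact h C' hC hC'
  · -- anti-reflexivity
    intro a B h
    have h1 : c B ⊆ c ({a} ∪ B) := cmono _ _ Set.subset_union_right
    have := h (c B) (cext B) h1
    rw [Set.inter_self, cidem] at this
    have ha : a ∈ c ({a} ∪ c B) := cext _ (Or.inl rfl)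
    rw [this] at ha
    exact ha
  · -- finite character
    intro cfin A B C h C' hC hC'
    apply Set.Subset.antisymm
    · intro x hx
      obtain ⟨F, hFsub, hxF⟩ := cfin _ x hx.1
      set A₀ : Set α := ↑F ∩ A with hA₀
      have hA₀fin : A₀.Finite := (F.finite_toSet).inter_of_left A
      have hFsub' : (↑F : Set α) ⊆ A₀ ∪ C' := by
        intro y hy
        rcases hFsub hy with hyA | hyC
        · exact Or.inl ⟨hy, hyA⟩
        · exact Or.inr hyC
      have hxA₀ : x ∈ c (A₀ ∪ C') := cmono _ _ hFsub' hxF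
      have := h A₀ Set.inter_subset_right hA₀fin C' hC hC'
      rw [← this]
      exact ⟨hxA₀, hx.2⟩
    · exact triv _ _ _
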